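/- Let r, s ≥ 1 be integers and t = min(r, s). Let M be an r×s matrix with entries in {−1, 0, 1} and u ∈ {−1, 0, 1}^r. Let F be a field of characteristic 0, and view the entries of M and u as elements of F via the canonical ring map from ℤ. If the linear system M·x = u has a solution x ∈ F^s, then there exist integers a_1, …, a_s and b with b ≠ 0, |b| ≤ t!, and |a_i| ≤ t! for every i ∈ [s], such that the rational vector x ∈ ℚ^s given by x_i = a_i/b satisfies M·x = u over ℚ. -/

import Mathlib

open Matrix Module Submodule Finset


/-- Lemma on small solutions of {-1,0,1} linear systems, characteristic 0 case.
If a linear system `M·x = u` with entries in `{-1,0,1}` has a solution over a field `F` of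
characteristic `0`, then it has a rational solution `x_i = a_i / b` with
`|a_i|, |b| ≤ t!` where `t = min r s`. -/
theorem stmt0 (r s : ℕ) (hr : 1 ≤ r) (hs : 1 ≤ s)
    (M : Matrix (Fin r) (Fin s) ℤ) (u : Fin r → ℤ)
    (hM : ∀ i j, M i j ∈ ({-1, 0, 1} : Set ℤ))
    (hu : ∀ i, u i ∈ ({-1, 0, 1} : Set ℤ))
    (F : Type*) [Field F] [CharZero F]
    (hsol : ∃ x : Fin s → F, ∀ i, ∑ j, (M i j : F) * x j = (u i : F)) :
    ∃ (a : Fin s → ℤ) (b : ℤ), b ≠ 0 ∧ |b| ≤ ((min r s).factorial : ℤ) ∧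
      (∀ j, |a j| ≤ ((min r s).factorial : ℤ)) ∧
      ∀ i, ∑ j, (M i j : ℚ) * ((a j : ℚ) / (b : ℚ)) = (u i : ℚ) := by
  classical
  obtain ⟨x, hx⟩ := hsol
  have hM1 : ∀ i j, |M i j| ≤ 1 := by
    intro i j
    have := hM i j
    simp only [Set.mem_insert_iff, Set.mem_singleton_iff] at this
    rcases this with h | h | h <;> simp [h]
  have hu1 : ∀ i, |u i| ≤ 1 := by
    intro i
    have := hu i
    simp only [Set.mem_insert_iff, Set.mem_singleton_iff] at this
    rcases this with h | h | h <;> simp [h]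
  set col : Fin s → (Fin r → ℚ) := fun j i => (M i j : ℚ) with hcol
  set uQ : Fin r → ℚ := fun i => (u i : ℚ) with huQdef
  -- Step A : uQ is in the span of the columns over ℚ
  have hmem : uQ ∈ span ℚ (Set.range col) := by
    by_contra hnm
    obtain ⟨f, hfu, hfmap⟩ := Submodule.exists_dual_map_eq_bot_of_notMem hnm inferInstance
    have hfcol : ∀ j, f (col j) = 0 := by
      intro j
      have : f (col j) ∈ (span ℚ (Set.range col)).map f :=
        Submodule.mem_map_of_mem (subset_span (Set.mem_range_self j))
      rwa [hfmap, Submodule.mem_bot] at this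
    set y : Fin r → ℚ := fun i => f (fun k => if i = k then 1 else 0) with hy
    have hfv : ∀ v : Fin r → ℚ, f v = ∑ i, v i * y i := by
      intro v
      rw [LinearMap.pi_apply_eq_sum_univ]
      simp [hy, smul_eq_mul]
    have hzero : ∀ j, ∑ i, (y i : F) * (M i j : F) = 0 := by
      intro j
      have h0 : ∑ i, (M i j : ℚ) * y i = 0 := by
        have := hfcol j
        rwa [hfv] at this
      have := congrArg (fun q : ℚ => (q : F)) h0
      push_cast at this
      rw [← this]
      apply Finset.sum_congr rfl
      intro i _
      ring
    have hne : ((f uQ : ℚ) : F) ≠ 0 := by exact_mod_cast hfu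
    apply hne
    have h1 : ((f uQ : ℚ) : F) = ∑ i, (u i : F) * (y i : F) := by
      rw [hfv]
      push_cast
      apply Finset.sum_congr rfl
      intro i _
      simp [uQ]
    rw [h1]
    calc ∑ i, (u i : F) * (y i : F)
        = ∑ i, (∑ j, (M i j : F) * x j) * (y i : F) := by
          apply Finset.sum_congr rfl; intro i _; rw [hx i]
      _ = ∑ i, ∑ j, (M i j : F) * x j * (y i : F) := by
          apply Finset.sum_congr rfl; intro i _; rw [Finset.sum_mul]
      _ = ∑ j, ∑ i, (M i j : F) * x j * (y i : F) := Finset.sum_comm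
      _ = ∑ j, (∑ i, (y i : F) * (M i j : F)) * x j := by
          apply Finset.sum_congr rfl; intro j _
          rw [Finset.sum_mul]
          apply Finset.sum_congr rfl; intro i _
          ring
      _ = 0 := by
          apply Finset.sum_eq_zero; intro j _; rw [hzero j, zero_mul]
  -- Step B: choose an independent subset of columns spanning u
  obtain ⟨bset, hb_sub, hb_span, hb_li⟩ := exists_linearIndependent ℚ (Set.range col)
  have hbfin : bset.Finite := (Set.finite_range col).subset hb_sub
  haveI : Fintype bset := hbfin.fintype
  have hchoice : ∀ v : bset, ∃ j, col j = (v : Fin r → ℚ) := fun v => hb_sub v.2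
  choose ι hι using hchoice
  have hι_inj : Function.Injective ι := by
    intro v w h
    apply Subtype.ext
    rw [← hι v, ← hι w, h]
  set J : Finset (Fin s) := Finset.univ.image ι with hJdef
  have hcolJ : ∀ j ∈ J, col j ∈ bset := by
    intro j hj
    simp only [hJdef, Finset.mem_image, Finset.mem_univ, true_and] at hj
    obtain ⟨v, rfl⟩ := hj
    rw [hι]; exact v.2
  set g : {j // j ∈ J} → bset := fun j => ⟨col ↑j, hcolJ _ j.2⟩ with hgdef
  have hg_inj : Function.Injective g := by
    intro p q h
    have hp := p.2; have hq := q.2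
    simp only [hJdef, Finset.mem_image, Finset.mem_univ, true_and] at hp hq
    obtain ⟨v, hv⟩ := hp; obtain ⟨w, hw⟩ := hq
    have h' : col ↑p = col ↑q := congrArg Subtype.val h
    have hv2 : (v : Fin r → ℚ) = col ↑p := by rw [← hv, hι]
    have hw2 : (w : Fin r → ℚ) = col ↑q := by rw [← hw, hι]
    have hvw : v = w := Subtype.ext (by rw [hv2, hw2, h'])
    apply Subtype.ext
    rw [← hv, ← hw, hvw]
  have hg_surj : Function.Surjective g := by
    intro v
    have hmemJ : ι v ∈ J := by simp [hJdef]
    refine ⟨⟨ι v, hmemJ⟩, ?_⟩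
    apply Subtype.ext
    exact hι v
  set gE : {j // j ∈ J} ≃ bset := Equiv.ofBijective g ⟨hg_inj, hg_surj⟩ with hgE
  have hJ_li : LinearIndependent ℚ (fun j : {j // j ∈ J} => col ↑j) := by
    have := hb_li.comp g hg_inj
    exact this
  -- u in span of columns indexed by J
  have humem : uQ ∈ span ℚ (col '' (J : Set (Fin s))) := by
    apply span_mono _ (hb_span ▸ hmem)
    intro v hv
    refine ⟨ι ⟨v, hv⟩, ?_, hι ⟨v, hv⟩⟩
    simp [hJdef]
  obtain ⟨l, hl_supp, hl⟩ := (Finsupp.mem_span_image_iff_linearCombination ℚ).mp humem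
  have hl0 : ∀ j ∉ J, l j = 0 := by
    intro j hj
    by_contra h0
    exact hj (hl_supp (Finsupp.mem_support_iff.mpr h0))
  have hsum : ∀ i, ∑ j, l j * col j i = uQ i := by
    intro i
    have h1 : ∑ j, l j • col j = uQ := by
      rw [← hl, Finsupp.linearCombination_apply, Finsupp.sum_fintype]
      intro j; exact zero_smul _ _
    have := congrFun h1 i
    simpa [Finset.sum_apply] using this
  -- the r × J matrix of selected columns
  set A : Matrix (Fin r) {j // j ∈ J} ℚ := Matrix.of (fun i j => col ↑j i) with hAdef
  have hAT : Aᵀ = fun j : {j // j ∈ J} => col ↑j := rfl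
  have hrankA : A.rank = Fintype.card {j // j ∈ J} := by
    rw [Matrix.rank_eq_finrank_span_cols, show A.col = Aᵀ from rfl, hAT]
    exact finrank_span_eq_card hJ_li
  -- select independent rows
  obtain ⟨cset, hc_sub, hc_span, hc_li⟩ := exists_linearIndependent ℚ (Set.range (fun i => A i))
  have hcfin : cset.Finite := (Set.finite_range _).subset hc_sub
  haveI : Fintype cset := hcfin.fintype
  have hc_card : Fintype.card cset = Fintype.card {j // j ∈ J} := by
    have h1 : finrank ℚ (span ℚ cset) = cset.toFinset.card := finrank_span_set_eq_card hc_li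
    have h2 : finrank ℚ (span ℚ cset) = Fintype.card {j // j ∈ J} := by
      rw [hc_span, ← hrankA, Matrix.rank_eq_finrank_span_row]; rfl
    rw [← Set.toFinset_card, ← h1, h2]
  have hchoice2 : ∀ w : cset, ∃ i, A i = (w : {j // j ∈ J} → ℚ) := fun w => hc_sub w.2
  choose κ hκ using hchoice2
  have hκ_inj : Function.Injective κ := by
    intro v w h
    apply Subtype.ext
    rw [← hκ v, ← hκ w, h]
  set e : cset ≃ {j // j ∈ J} := Fintype.equivOfCardEq hc_card with hedef
  -- square integer matrix
  set Sz : Matrix {j // j ∈ J} {j // j ∈ J} ℤ := Matrix.of (fun p q => M (κ (e.symm p)) ↑q) with hSzdef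
  set S : Matrix {j // j ∈ J} {j // j ∈ J} ℚ := Sz.map (Int.cast : ℤ → ℚ) with hSdef
  have hSA : ∀ p, S p = A (κ (e.symm p)) := by
    intro p; funext q; rfl
  have hSrows : (fun p => S p) = fun p => ((e.symm p : cset) : {j // j ∈ J} → ℚ) := by
    funext p
    rw [hSA, hκ]
  have hSunit : IsUnit S := by
    rw [← Matrix.linearIndependent_rows_iff_isUnit]
    rw [show S.row = fun p => S p from rfl, hSrows]
    exact hc_li.comp _ e.symm.injective
  have hSdet : S.det ≠ 0 := by
    intro h
    have := hSunit
    rw [Matrix.isUnit_iff_isUnit_det, h] at this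
    exact this.ne_zero rfl
  -- Cramer's rule
  set uz : {j // j ∈ J} → ℤ := fun p => u (κ (e.symm p)) with huzdef
  set u' : {j // j ∈ J} → ℚ := fun p => (uz p : ℚ) with hu'def
  set g0 : {j // j ∈ J} → ℚ := fun q => l ↑q with hg0def
  have hSg : S *ᵥ g0 = u' := by
    funext p
    have hsum' : ∑ j ∈ J, l j * col j (κ (e.symm p)) = uQ (κ (e.symm p)) := by
      rw [← hsum (κ (e.symm p))]
      apply Finset.sum_subset (Finset.subset_univ J)
      intro j _ hj
      rw [hl0 j hj, zero_mul]
    calc (S *ᵥ g0) p = ∑ q : {j // j ∈ J}, (M (κ (e.symm p)) ↑q : ℚ) * l ↑q := rfl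
      _ = ∑ j ∈ J, (fun j => l j * col j (κ (e.symm p))) j := by
          rw [← Finset.sum_coe_sort J]
          apply Finset.sum_congr rfl
          intro q _
          simp [hcol, mul_comm]
      _ = u' p := by rw [hsum']
  have hcr : Matrix.cramer S u' = S.det • g0 := by
    apply Matrix.mulVec_injective_iff_isUnit.mpr hSunit
    rw [Matrix.mulVec_cramer, Matrix.mulVec_smul, hSg]
  -- integrality
  have hdetmap : ((Sz.det : ℤ) : ℚ) = S.det := RingHom.map_det (Int.castRingHom ℚ) Sz
  have hcrammap : ∀ q, ((Matrix.cramer Sz uz q : ℤ) : ℚ) = Matrix.cramer S u' q := by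
    intro q
    rw [Matrix.cramer_apply, Matrix.cramer_apply]
    have hupd : (Sz.updateCol q uz).map (Int.cast : ℤ → ℚ) = S.updateCol q u' := by
      ext p p'
      by_cases h : p' = q <;>
        simp [Matrix.updateCol_apply, h, hSdef, hu'def, Matrix.map_apply]
    rw [← hupd]
    exact RingHom.map_det (Int.castRingHom ℚ) _
  -- cardinality and factorial bounds
  set n := Fintype.card {j // j ∈ J} with hn
  have hns : n ≤ s := by
    have := Fintype.card_le_of_injective (fun p : {j // j ∈ J} => (p : Fin s))
      Subtype.val_injective
    simpa [hn] using this
  have hnr : n ≤ r := by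
    have h1 := Fintype.card_le_of_injective κ hκ_inj
    rw [hc_card] at h1
    simpa using h1
  have hfact : (n.factorial : ℤ) ≤ ((min r s).factorial : ℤ) := by
    exact_mod_cast Nat.factorial_le (le_min hnr hns)
  have hdet_le : |Sz.det| ≤ (n.factorial : ℤ) := by
    have h := Matrix.det_le (A := Sz) (abv := AbsoluteValue.abs) (x := (1:ℤ))
      (fun i j => by simpa [hSzdef] using hM1 _ _)
    simpa [hn] using h
  have hcram_le : ∀ q, |Matrix.cramer Sz uz q| ≤ (n.factorial : ℤ) := by
    intro q
    rw [Matrix.cramer_apply]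
    have hb : ∀ p p', |(Sz.updateCol q uz) p p'| ≤ (1:ℤ) := by
      intro p p'
      by_cases h : p' = q
      · simpa [Matrix.updateCol_apply, h] using hu1 _
      · simpa [Matrix.updateCol_apply, h, hSzdef] using hM1 _ _
    have h := Matrix.det_le (A := Sz.updateCol q uz) (abv := AbsoluteValue.abs)
      (x := (1:ℤ)) (fun i j => by simpa using hb i j)
    simpa [hn] using h
  -- assemble the answer
  refine ⟨fun j => if h : j ∈ J then Matrix.cramer Sz uz ⟨j, h⟩ else 0, Sz.det, ?_, ?_, ?_, ?_⟩
  · intro h0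
    apply hSdet
    rw [← hdetmap, h0, Int.cast_zero]
  · exact le_trans hdet_le hfact
  · intro j
    by_cases h : j ∈ J
    · simp only [dif_pos h]
      exact le_trans (hcram_le _) hfact
    · simp only [dif_neg h, abs_zero]
      positivity
  · intro i
    have hlval : ∀ j, ((if h : j ∈ J then Matrix.cramer Sz uz ⟨j, h⟩ else 0 : ℤ) : ℚ)
        / (Sz.det : ℚ) = l j := by
      intro j
      by_cases h : j ∈ J
      · have h1 : ((Matrix.cramer Sz uz ⟨j, h⟩ : ℤ) : ℚ) = S.det * l j := by
          rw [hcrammap, hcr]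
          simp [hg0def]
        rw [dif_pos h, h1, hdetmap, mul_comm, mul_div_assoc, div_self hSdet, mul_one]
      · rw [dif_neg h, hl0 j h, Int.cast_zero, zero_div]
    calc ∑ j, (M i j : ℚ) *
          (((if h : j ∈ J then Matrix.cramer Sz uz ⟨j, h⟩ else 0 : ℤ) : ℚ) / (Sz.det : ℚ))
        = ∑ j, (M i j : ℚ) * l j := by
          apply Finset.sum_congr rfl
          intro j _
          rw [hlval j]
      _ = uQ i := by
          rw [← hsum i]
          apply Finset.sum_congr rfl
          intro j _
          rw [mul_comm]
      _ = (u i : ℚ) := rfl
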